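/- arXiv:2311.02701 — 4 statements merged into one kernel-verified Lean document; each statement's English description precedes it below -/
import Mathlib

section
/- Let $[a,b] \subset \mathbb{R}$, $z \in \mathbb{R} \setminus [a,b]$ and $w \in \mathbb{C}$. Define $h_{w,z}(t) = (t-w)/(t-z)$, $\lambda^\star = (|w|^2 - z\,\mathrm{Re}(w))/(\mathrm{Re}(w) - z)$ (when $\mathrm{Re}(w) \neq z$), and $h^\star = |h_{w,z}(\lambda^\star)|$ if $\lambda^\star \in [a,b]$ and $h^\star = 0$ otherwise. Then $\max_{\lambda \in [a,b]} |h_{w,z}(\lambda)| = \max\{ |(a-w)/(a-z)|, |(b-w)/(b-z)|, h^\star \}$. -/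
/-- Lemma 3.1 (generalization): exact value of `‖h_{w,z}‖_{[a,b]}` for real `z ∉ [a,b]`
and complex `w`. -/
theorem stmt_0 (a b z : ℝ) (w : ℂ) (hab : a ≤ b) (hz : z ∉ Set.Icc a b)
    (hre : w.re ≠ z) :
    IsGreatest ((fun t : ℝ => ‖((t : ℂ) - w) / ((t : ℂ) - z)‖) '' Set.Icc a b)
      (max (max (‖((a : ℂ) - w) / ((a : ℂ) - z)‖)
                (‖((b : ℂ) - w) / ((b : ℂ) - z)‖))
        (if ((‖w‖ ^ 2 - z * w.re) / (w.re - z)) ∈ Set.Icc a b then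
            norm (((((‖w‖ ^ 2 - z * w.re) / (w.re - z) : ℝ)) - w) /
              ((((‖w‖ ^ 2 - z * w.re) / (w.re - z) : ℝ)) - z))
          else 0)) := by
  set f : ℝ → ℝ := fun t : ℝ => ‖((t : ℂ) - w) / ((t : ℂ) - z)‖ with hfdef
  set L : ℝ := (‖w‖ ^ 2 - z * w.re) / (w.re - z) with hLdef
  set u : ℝ := w.re with hudef
  set v : ℝ := w.im with hvdef
  have hne : ∀ t ∈ Set.Icc a b, t ≠ z := fun t ht h => hz (h ▸ ht)
  have hneC : ∀ t ∈ Set.Icc a b, ((t : ℂ) - (z : ℂ)) ≠ 0 := by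
    intro t ht h
    exact hne t ht (by exact_mod_cast sub_eq_zero.mp h)
  have hfnonneg : ∀ t, 0 ≤ f t := fun t => norm_nonneg _
  have hcont : ContinuousOn f (Set.Icc a b) := by
    apply continuous_norm.comp_continuousOn
    exact ContinuousOn.div
      (Continuous.continuousOn (by continuity))
      (Continuous.continuousOn (by continuity)) hneC
  -- membership helper
  have hmaxmem : ∀ x y : ℝ, x ∈ f '' Set.Icc a b → y ∈ f '' Set.Icc a b →
      max x y ∈ f '' Set.Icc a b := by
    intro x y hx hy
    rcases max_choice x y with h | h <;> rw [h] <;> assumption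
  have hamem : f a ∈ f '' Set.Icc a b := ⟨a, ⟨le_refl a, hab⟩, rfl⟩
  have hbmem : f b ∈ f '' Set.Icc a b := ⟨b, ⟨hab, le_refl b⟩, rfl⟩
  constructor
  · -- membership
    by_cases hLm : L ∈ Set.Icc a b
    · rw [if_pos hLm]
      exact hmaxmem _ _ (hmaxmem _ _ hamem hbmem) ⟨L, hLm, rfl⟩
    · rw [if_neg hLm, max_eq_left (le_trans (hfnonneg a) (le_max_left _ _))]
      exact hmaxmem _ _ hamem hbmem
  · -- upper bound
    rintro x ⟨t, ht, rfl⟩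
    obtain ⟨c, hc, hcmax⟩ := isCompact_Icc.exists_isMaxOn (Set.nonempty_Icc.mpr hab) hcont
    have h1 : f t ≤ f c := hcmax ht
    refine le_trans h1 ?_
    -- show f c ≤ RHS
    rcases eq_or_lt_of_le hc.1 with hca | hca
    · exact le_trans (le_of_eq (by rw [hca])) (le_trans (le_max_left _ _) (le_max_left _ _))
    rcases eq_or_lt_of_le hc.2 with hcb | hcb
    · exact le_trans (le_of_eq (by rw [hcb])) (le_trans (le_max_right _ _) (le_max_left _ _))
    -- interior case
    have hcz : c ≠ z := hne c hc
    set φ : ℝ → ℝ := fun t : ℝ => ((t - u) ^ 2 + v ^ 2) / ((t - z) ^ 2) with hφdef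
    have hfφ : ∀ s : ℝ, f s ^ 2 = φ s := by
      intro s
      simp only [hfdef, hφdef]
      rw [Complex.sq_norm, map_div₀, Complex.normSq_apply, Complex.normSq_apply]
      simp [Complex.sub_re, Complex.sub_im]
      ring
    have hnhds : Set.Icc a b ∈ nhds c := Icc_mem_nhds hca hcb
    have hlocf : IsLocalMax f c := hcmax.isLocalMax hnhds
    have hlocφ : IsLocalMax φ c := by
      have h2 : ∀ᶠ s in nhds c, f s ^ 2 ≤ f c ^ 2 :=
        hlocf.mono fun s hs => pow_le_pow_left₀ (hfnonneg s) hs 2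
      refine h2.mono fun s hs => ?_
      rw [← hfφ s, ← hfφ c]; exact hs
    -- derivative of φ at c
    have hdz : (c - z) ≠ 0 := sub_ne_zero.mpr hcz
    have hden : ((c - z) ^ 2) ≠ 0 := pow_ne_zero _ hdz
    have h1' : HasDerivAt (fun s : ℝ => (s - u) ^ 2 + v ^ 2) (2 * (c - u)) c := by
      have := (((hasDerivAt_id c).sub_const u).fun_pow 2).add_const (v ^ 2)
      exact this.congr_deriv (by simp only [id, Nat.cast_ofNat]; ring)
    have h2' : HasDerivAt (fun s : ℝ => (s - z) ^ 2) (2 * (c - z)) c := by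
      have := ((hasDerivAt_id c).sub_const z).fun_pow 2
      exact this.congr_deriv (by simp only [id, Nat.cast_ofNat]; ring)
    have hd : HasDerivAt φ
        ((2 * (c - u) * ((c - z) ^ 2) - ((c - u) ^ 2 + v ^ 2) * (2 * (c - z))) /
          ((c - z) ^ 2) ^ 2) c := h1'.div h2' hden
    have hD0 : (2 * (c - u) * ((c - z) ^ 2) - ((c - u) ^ 2 + v ^ 2) * (2 * (c - z))) /
        ((c - z) ^ 2) ^ 2 = 0 := by
      rw [← hd.deriv]
      exact hlocφ.deriv_eq_zero
    have hnum : 2 * (c - u) * ((c - z) ^ 2) - ((c - u) ^ 2 + v ^ 2) * (2 * (c - z)) = 0 :=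
      (div_eq_zero_iff.mp hD0).resolve_right (pow_ne_zero _ hden)
    have hkey : (c - u) * (u - z) - v ^ 2 = 0 := by
      have h3 : (2 * (c - z)) * ((c - u) * (u - z) - v ^ 2) = 0 := by linear_combination hnum
      rcases mul_eq_zero.mp h3 with h | h
      · exfalso
        rcases mul_eq_zero.mp h with h | h
        · norm_num at h
        · exact hdz h
      · exact h
    have habs : ‖w‖ ^ 2 = u ^ 2 + v ^ 2 := by
      rw [Complex.sq_norm, Complex.normSq_apply]; ring
    have hcL : c = L := by
      rw [hLdef, habs]
      field_simp [sub_ne_zero.mpr hre]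
      linear_combination hkey
    rw [if_pos (hcL ▸ hc)]
    exact le_trans (le_of_eq (by rw [hcL])) (le_max_right _ _)
end

section
/- Let $A \in \mathbb{R}^{n \times n}$ and suppose $V_{m+1} = [V_m, \vec v_{m+1}]$ has orthonormal columns and satisfies the rational Arnoldi relation $A V_m K_m + k_{m+1,m} A \vec v_{m+1} \vec e_m^T = V_m H_m + h_{m+1,m} \vec v_{m+1} \vec e_m^T$ with $K_m$ invertible. Then with $A_m = V_m^T A V_m$, for every $z \in \mathbb{C}$: $(A - zI)V_m = V_m(A_m - zI) + (I - V_m V_m^T)(h_{m+1,m} I - k_{m+1,m} A)\vec v_{m+1} \vec e_m^T K_m^{-1}$. -/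
open Matrix

lemma aux_mul_vecMulVec {p q r : Type*} [Fintype q] (M : Matrix p q ℂ) (a : q → ℂ) (b : r → ℂ) :
    M * vecMulVec a b = vecMulVec (M *ᵥ a) b := by
  ext i j
  simp [Matrix.mul_apply, vecMulVec_apply, Matrix.mulVec, dotProduct, Finset.sum_mul, mul_assoc]

lemma aux_vecMulVec_smul {p r : Type*} (c : ℂ) (a : p → ℂ) (b : r → ℂ) :
    vecMulVec (c • a) b = c • vecMulVec a b := by
  ext i j
  simp [vecMulVec_apply, mul_assoc]

lemma aux_vecMulVec_sub {p r : Type*} (a a' : p → ℂ) (b : r → ℂ) :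
    vecMulVec (a - a') b = vecMulVec a b - vecMulVec a' b := by
  ext i j
  simp [vecMulVec_apply, sub_mul]

/-- Shifted rational Arnoldi relation: for every `z ∈ ℂ`,
`(A - zI)Vₘ = Vₘ(Aₘ - zI) + (I - VₘVₘᵀ)(h_{m+1,m} I - k_{m+1,m} A) v_{m+1} eₘᵀ Kₘ⁻¹`. -/
theorem stmt_7 (n m : ℕ) (A : Matrix (Fin n) (Fin n) ℝ)
    (V : Matrix (Fin n) (Fin (m + 1)) ℝ) (v : Fin n → ℝ)
    (K H : Matrix (Fin (m + 1)) (Fin (m + 1)) ℝ) (hh kk : ℝ)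
    (hVV : Vᵀ * V = 1) (hVv : Vᵀ *ᵥ v = 0) (hvv : v ⬝ᵥ v = 1)
    (hK : IsUnit K)
    (harnoldi : A * V * K + kk • Matrix.vecMulVec (A *ᵥ v) (Pi.single (Fin.last m) 1) =
      V * H + hh • Matrix.vecMulVec v (Pi.single (Fin.last m) 1)) :
    ∀ z : ℂ,
      (A.map Complex.ofReal - z • 1) * V.map Complex.ofReal =
        V.map Complex.ofReal *
            ((V.map Complex.ofReal)ᵀ * A.map Complex.ofReal * V.map Complex.ofReal - z • 1) +
          Matrix.vecMulVec
              ((1 - V.map Complex.ofReal * (V.map Complex.ofReal)ᵀ) *ᵥ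
                ((hh : ℂ) • (fun i => (v i : ℂ)) -
                  (kk : ℂ) • (A.map Complex.ofReal *ᵥ fun i => (v i : ℂ))))
              (fun j => ((Pi.single (Fin.last m) 1 : Fin (m + 1) → ℝ) j : ℂ)) *
            (K.map Complex.ofReal)⁻¹ := by
  intro z
  set A' := A.map Complex.ofReal with hA'
  set V' := V.map Complex.ofReal with hV'def
  set K' := K.map Complex.ofReal with hK'def
  set H' := H.map Complex.ofReal with hH'def
  set v' : Fin n → ℂ := fun i => (v i : ℂ) with hv'def
  set e' : Fin (m + 1) → ℂ := fun j => ((Pi.single (Fin.last m) 1 : Fin (m + 1) → ℝ) j : ℂ)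
    with he'def
  -- mapped hypotheses
  have hVV' : V'ᵀ * V' = 1 := by
    ext i j
    have h := congrArg (fun M : Matrix (Fin (m+1)) (Fin (m+1)) ℝ => ((M i j : ℝ) : ℂ)) hVV
    simp only [Matrix.mul_apply, Matrix.one_apply, Matrix.transpose_apply, Matrix.map_apply,
      hV'def] at h ⊢
    push_cast at h
    convert h using 2 <;> simp [apply_ite]
  have hK' : IsUnit K' := by
    rw [Matrix.isUnit_iff_isUnit_det] at hK ⊢
    have : K'.det = (K.det : ℂ) := by
      rw [hK'def, ← Complex.coe_algebraMap, ← RingHom.mapMatrix_apply, ← RingHom.map_det]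
    rw [this]
    simpa [isUnit_iff_ne_zero] using hK
  have harnoldi' : A' * V' * K' + (kk : ℂ) • vecMulVec (A' *ᵥ v') e' =
      V' * H' + (hh : ℂ) • vecMulVec v' e' := by
    ext i j
    have h := congrArg (fun M : Matrix (Fin n) (Fin (m+1)) ℝ => ((M i j : ℝ) : ℂ)) harnoldi
    simp only [Matrix.add_apply, Matrix.smul_apply, Matrix.mul_apply, vecMulVec_apply,
      Matrix.mulVec, dotProduct, smul_eq_mul, Matrix.map_apply, hA', hV'def, hK'def, hH'def,
      hv'def, he'def] at h ⊢
    push_cast at h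
    exact h
  -- key algebra
  set W : Matrix (Fin n) (Fin (m + 1)) ℂ :=
    vecMulVec ((hh : ℂ) • v' - (kk : ℂ) • (A' *ᵥ v')) e' with hWdef
  have hAVK : A' * V' * K' = V' * H' + W := by
    rw [hWdef, aux_vecMulVec_sub, aux_vecMulVec_smul, aux_vecMulVec_smul,
      ← add_sub_assoc, eq_sub_iff_add_eq, harnoldi']
  have hKK : K' * K'⁻¹ = 1 := Matrix.mul_nonsing_inv _ ((Matrix.isUnit_iff_isUnit_det _).mp hK')
  have hAV : A' * V' = (V' * H' + W) * K'⁻¹ := by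
    rw [← hAVK, Matrix.mul_assoc, hKK, Matrix.mul_one]
  have hgoalterm : vecMulVec ((1 - V' * V'ᵀ) *ᵥ ((hh : ℂ) • v' - (kk : ℂ) • (A' *ᵥ v'))) e' =
      (1 - V' * V'ᵀ) * W := by
    rw [hWdef, aux_mul_vecMulVec]
  rw [hgoalterm]
  have expand : (1 - V' * V'ᵀ) * W * K'⁻¹ = W * K'⁻¹ - V' * (V'ᵀ * W * K'⁻¹) := by
    simp [Matrix.sub_mul, Matrix.mul_assoc]
  rw [expand]
  have hAm : V'ᵀ * A' * V' = (H' + V'ᵀ * W) * K'⁻¹ := by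
    rw [Matrix.mul_assoc, hAV, ← Matrix.mul_assoc, Matrix.mul_add, ← Matrix.mul_assoc,
      hVV', Matrix.one_mul]
  rw [hAm, Matrix.sub_mul, hAV]
  simp only [Matrix.mul_sub, Matrix.mul_add, Matrix.add_mul, Matrix.sub_mul, Matrix.mul_assoc,
    Matrix.smul_mul, Matrix.mul_smul, Matrix.mul_one, Matrix.one_mul]
  abel
end

section
/- Under the rational Arnoldi relation $(A - zI)V_m = V_m(A_m - zI) + (I - V_m V_m^T)(h_{m+1,m} I - k_{m+1,m} A)\vec v_{m+1} \vec e_m^T K_m^{-1}$, with $\vec b = V_m \vec e_1 \|\vec b\|_2$ and $A_m - zI$ invertible, the residual of the Galerkin approximation $\vec x_m(z) = V_m(A_m - zI)^{-1}\vec e_1 \|\vec b\|_2$ satisfies $\vec r_m(z) = \vec b - (A - zI)\vec x_m(z) = -(I - V_m V_m^T)(h_{m+1,m}I - k_{m+1,m}A)\vec v_{m+1} \cdot \big(\vec e_m^T K_m^{-1}(A_m - zI)^{-1}\vec e_1\big)\|\vec b\|_2$. In particular, the residuals for all shifts $z$ are scalar multiples of the single fixed vector $(I - V_mV_m^T)(h_{m+1,m}I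 - k_{m+1,m}A)\vec v_{m+1}$. -/
open Matrix

/-- The Euclidean norm of a real vector. -/
noncomputable def euclNorm {n : ℕ} (b : Fin n → ℝ) : ℝ := Real.sqrt (b ⬝ᵥ b)

/-- Under the shifted rational Arnoldi relation, the Galerkin residual
`r_m(z) = b - (A - zI)x_m(z)` equals
`-(I - VVᵀ)(h I - k A)v · (eₘᵀ K⁻¹ (Aₘ - zI)⁻¹ e₁)‖b‖₂`; in particular all shifted
residuals are scalar multiples of the fixed vector `(I - VVᵀ)(h I - k A)v`. -/
theorem stmt_8 (n m : ℕ) (A : Matrix (Fin n) (Fin n) ℝ)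
    (V : Matrix (Fin n) (Fin (m + 1)) ℝ) (v : Fin n → ℝ)
    (K : Matrix (Fin (m + 1)) (Fin (m + 1)) ℝ) (hh kk : ℝ) (b : Fin n → ℝ) (z : ℂ)
    (hVV : Vᵀ * V = 1) (hVv : Vᵀ *ᵥ v = 0) (hK : IsUnit K)
    (hb : b = euclNorm b • (V *ᵥ Pi.single 0 1))
    (hAm : IsUnit ((V.map Complex.ofReal)ᵀ * A.map Complex.ofReal * V.map Complex.ofReal
      - z • 1))
    (hrel : (A.map Complex.ofReal - z • 1) * V.map Complex.ofReal =
      V.map Complex.ofReal *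
          ((V.map Complex.ofReal)ᵀ * A.map Complex.ofReal * V.map Complex.ofReal - z • 1) +
        Matrix.vecMulVec
            ((1 - V.map Complex.ofReal * (V.map Complex.ofReal)ᵀ) *ᵥ
              ((hh : ℂ) • (fun i => (v i : ℂ)) -
                (kk : ℂ) • (A.map Complex.ofReal *ᵥ fun i => (v i : ℂ))))
            (fun j => ((Pi.single (Fin.last m) 1 : Fin (m + 1) → ℝ) j : ℂ)) *
          (K.map Complex.ofReal)⁻¹) :
    (fun i => (b i : ℂ)) -
        (A.map Complex.ofReal - z • 1) *ᵥ
          ((euclNorm b : ℂ) • (V.map Complex.ofReal *ᵥ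
            ((V.map Complex.ofReal)ᵀ * A.map Complex.ofReal * V.map Complex.ofReal - z • 1)⁻¹ *ᵥ
              Pi.single 0 1)) =
      (-(((fun j => ((Pi.single (Fin.last m) 1 : Fin (m + 1) → ℝ) j : ℂ)) ⬝ᵥ
            ((K.map Complex.ofReal)⁻¹ *ᵥ
              ((V.map Complex.ofReal)ᵀ * A.map Complex.ofReal * V.map Complex.ofReal
                - z • 1)⁻¹ *ᵥ Pi.single 0 1)) * (euclNorm b : ℂ))) •
        ((1 - V.map Complex.ofReal * (V.map Complex.ofReal)ᵀ) *ᵥ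
          ((hh : ℂ) • (fun i => (v i : ℂ)) -
            (kk : ℂ) • (A.map Complex.ofReal *ᵥ fun i => (v i : ℂ)))) ∧
    ∃ c : ℂ,
      (fun i => (b i : ℂ)) -
          (A.map Complex.ofReal - z • 1) *ᵥ
            ((euclNorm b : ℂ) • (V.map Complex.ofReal *ᵥ
              ((V.map Complex.ofReal)ᵀ * A.map Complex.ofReal * V.map Complex.ofReal - z • 1)⁻¹ *ᵥ
                Pi.single 0 1)) =
        c • ((1 - V.map Complex.ofReal * (V.map Complex.ofReal)ᵀ) *ᵥ
          ((hh : ℂ) • (fun i => (v i : ℂ)) -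
            (kk : ℂ) • (A.map Complex.ofReal *ᵥ fun i => (v i : ℂ)))) := by

  set Vc := V.map Complex.ofReal with hVcdef
  set Ac := A.map Complex.ofReal with hAcdef
  set Am := Vcᵀ * Ac * Vc - z • (1 : Matrix (Fin (m+1)) (Fin (m+1)) ℂ) with hAmdef
  set u := (1 - Vc * Vcᵀ) *ᵥ
      ((hh : ℂ) • (fun i => (v i : ℂ)) - (kk : ℂ) • (Ac *ᵥ fun i => (v i : ℂ))) with hudef
  set e : Fin (m+1) → ℂ := fun j => ((Pi.single (Fin.last m) 1 : Fin (m + 1) → ℝ) j : ℂ)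
    with hedef
  set y : Fin (m+1) → ℂ := Am⁻¹ *ᵥ Pi.single 0 1 with hydef
  have hdet : IsUnit Am.det := (Matrix.isUnit_iff_isUnit_det _).mp hAm
  have hinv : Am * Am⁻¹ = 1 := Matrix.mul_nonsing_inv _ hdet
  have hsingle : (fun j => ((Pi.single (0 : Fin (m+1)) 1 : Fin (m+1) → ℝ) j : ℂ)) =
      (Pi.single 0 1 : Fin (m+1) → ℂ) := by
    funext j
    rcases eq_or_ne j 0 with h | h <;> simp [h, Pi.single_apply]
  have hbc : (fun i => (b i : ℂ)) = (euclNorm b : ℂ) • (Vc *ᵥ Pi.single 0 1) := by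
    funext i
    rw [congrFun hb i]
    simp only [Pi.smul_apply, smul_eq_mul, Complex.ofReal_mul]
    congr 1
    rw [← hsingle]
    simp only [Matrix.mulVec, dotProduct, hVcdef, Matrix.map_apply]
    push_cast
    rfl
  have hvm : ∀ (w : Fin n → ℂ) (x : Fin (m+1) → ℂ),
      Matrix.vecMulVec w e *ᵥ x = (e ⬝ᵥ x) • w := by
    intro w x
    funext i
    simp only [Matrix.mulVec, dotProduct, Matrix.vecMulVec_apply, Pi.smul_apply, smul_eq_mul]
    rw [Finset.sum_mul]
    refine Finset.sum_congr rfl fun j _ => ?_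
    ring
  have key : (fun i => (b i : ℂ)) - (Ac - z • 1) *ᵥ ((euclNorm b : ℂ) • (Vc *ᵥ y)) =
      (-((e ⬝ᵥ ((K.map Complex.ofReal)⁻¹ *ᵥ y)) * (euclNorm b : ℂ))) • u := by
    have h1 : (Ac - z • 1) *ᵥ ((euclNorm b : ℂ) • (Vc *ᵥ y)) =
        (euclNorm b : ℂ) • (((Ac - z • 1) * Vc) *ᵥ y) := by
      rw [Matrix.mulVec_smul, Matrix.mulVec_mulVec]
    rw [h1, hrel, Matrix.add_mulVec]
    have h2 : (Vc * Am) *ᵥ y = Vc *ᵥ Pi.single 0 1 := by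
      rw [hydef, Matrix.mulVec_mulVec, Matrix.mul_assoc, hinv, Matrix.mul_one]
    rw [h2, ← Matrix.mulVec_mulVec, hvm, hbc]
    funext i
    simp only [Pi.sub_apply, Pi.add_apply, Pi.smul_apply, smul_eq_mul]
    ring
  exact ⟨key, _, key⟩
end

section
/- In the setting of the rational Arnoldi decomposition with $\xi_m = \infty$ (i.e., $k_{m+1,m} = 0$), the residual of the shifted Galerkin approximation satisfies $\vec r_m(z) = -h_{m+1,m} \vec v_{m+1} \cdot \big(\vec e_m^T K_m^{-1}(A_m - zI)^{-1}\vec e_1\big)\|\vec b\|_2$; i.e., for every shift $z$ the residual is collinear with the next basis vector $\vec v_{m+1}$. -/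
open Matrix

/-- The Euclidean norm of a real vector. -/
noncomputable def enorm₂ {n : ℕ} (b : Fin n → ℝ) : ℝ := Real.sqrt (b ⬝ᵥ b)

private lemma vecMulVec_mulVec' {α : Type*} [CommRing α] {p q : ℕ} (u : Fin p → α)
    (w x : Fin q → α) : vecMulVec u w *ᵥ x = (w ⬝ᵥ x) • u := by
  funext i
  simp [vecMulVec_apply, mulVec, dotProduct, Finset.mul_sum, mul_assoc, mul_comm, mul_left_comm]

/-- When `ξ_m = ∞` (i.e. `k_{m+1,m} = 0`), the residual of the shifted Galerkin
approximation is collinear with the next basis vector `v_{m+1}`: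
`r_m(z) = -h_{m+1,m} v_{m+1} (eₘᵀ Kₘ⁻¹ (Aₘ - zI)⁻¹ e₁) ‖b‖₂`. -/
theorem stmt_9 (n m : ℕ) (A : Matrix (Fin n) (Fin n) ℝ)
    (V : Matrix (Fin n) (Fin (m + 1)) ℝ) (v : Fin n → ℝ)
    (K H : Matrix (Fin (m + 1)) (Fin (m + 1)) ℝ) (hh : ℝ) (b : Fin n → ℝ) (z : ℂ)
    (hVV : Vᵀ * V = 1) (hVv : Vᵀ *ᵥ v = 0) (hK : IsUnit K)
    (harnoldi : A * V * K = V * H + hh • Matrix.vecMulVec v (Pi.single (Fin.last m) 1))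
    (hHK : Vᵀ * A * V = H * K⁻¹)
    (hb : b = enorm₂ b • (V *ᵥ Pi.single 0 1))
    (hAm : IsUnit ((V.map Complex.ofReal)ᵀ * A.map Complex.ofReal * V.map Complex.ofReal
      - z • 1)) :
    (fun i => (b i : ℂ)) -
        (A.map Complex.ofReal - z • 1) *ᵥ
          ((enorm₂ b : ℂ) • (V.map Complex.ofReal *ᵥ
            ((V.map Complex.ofReal)ᵀ * A.map Complex.ofReal * V.map Complex.ofReal - z • 1)⁻¹ *ᵥ
              Pi.single 0 1)) =
      (-((hh : ℂ) *
          (((fun j => ((Pi.single (Fin.last m) 1 : Fin (m + 1) → ℝ) j : ℂ)) ⬝ᵥ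
            ((K.map Complex.ofReal)⁻¹ *ᵥ
              ((V.map Complex.ofReal)ᵀ * A.map Complex.ofReal * V.map Complex.ofReal
                - z • 1)⁻¹ *ᵥ Pi.single 0 1)) * (enorm₂ b : ℂ)))) •
        (fun i => (v i : ℂ)) := by
  set A' := A.map Complex.ofReal with hA'def
  set V' := V.map Complex.ofReal with hV'def
  set K' := K.map Complex.ofReal with hK'def
  set H' := H.map Complex.ofReal with hH'def
  set v' : Fin n → ℂ := fun i => (v i : ℂ) with hv'def
  set e' : Fin (m + 1) → ℂ := fun j => ((Pi.single (Fin.last m) 1 : Fin (m + 1) → ℝ) j : ℂ)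
    with he'def
  set M := V'ᵀ * A' * V' - z • 1 with hMdef
  set y := M⁻¹ *ᵥ (Pi.single 0 1 : Fin (m + 1) → ℂ) with hydef
  set c : ℂ := (enorm₂ b : ℂ) with hcdef
  -- invertibility facts
  have hMinv : M * M⁻¹ = 1 :=
    Matrix.mul_nonsing_inv M ((Matrix.isUnit_iff_isUnit_det M).mp hAm)
  have hKK : K * K⁻¹ = 1 :=
    Matrix.mul_nonsing_inv K ((Matrix.isUnit_iff_isUnit_det K).mp hK)
  have hKmap : K' * (K⁻¹).map Complex.ofReal = 1 := by
    ext i j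
    have h1 := congrArg Complex.ofReal (congrFun (congrFun hKK i) j)
    simpa [hK'def, Matrix.mul_apply, Matrix.map_apply, Matrix.one_apply, apply_ite] using h1
  have hKinv : K'⁻¹ = (K⁻¹).map Complex.ofReal := Matrix.inv_eq_right_inv hKmap
  have hK'inv : K' * K'⁻¹ = 1 := by rw [hKinv]; exact hKmap
  -- mapped Arnoldi relation
  have harnoldi' : A' * V' * K' = V' * H' + (hh : ℂ) • vecMulVec v' e' := by
    ext i j
    have h1 := congrArg Complex.ofReal (congrFun (congrFun harnoldi i) j)
    simpa [hA'def, hV'def, hK'def, hH'def, hv'def, he'def, Matrix.mul_apply, Matrix.map_apply, vecMulVec_apply, Matrix.add_apply,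
      Matrix.smul_apply, smul_eq_mul, mul_comm, mul_assoc, mul_left_comm] using h1
  -- mapped compression relation
  have hHK' : V'ᵀ * A' * V' = H' * K'⁻¹ := by
    rw [hKinv]
    ext i j
    have h1 := congrArg Complex.ofReal (congrFun (congrFun hHK i) j)
    simpa [hV'def, hA'def, hH'def, Matrix.mul_apply, Matrix.map_apply, Matrix.transpose_apply] using h1
  -- mapped b
  have hb' : (fun i => (b i : ℂ)) = c • (V' *ᵥ (Pi.single 0 1 : Fin (m + 1) → ℂ)) := by
    funext i
    have h1 := congrArg Complex.ofReal (congrFun hb i)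
    simp only [Pi.smul_apply, smul_eq_mul, Complex.ofReal_mul, Matrix.mulVec_single,
      mul_one, Matrix.map_apply] at h1 ⊢
    simpa [hV'def, hcdef] using h1
  -- A' * V' in terms of the compression
  have hAV : A' * V' = V' * (H' * K'⁻¹) + (hh : ℂ) • (vecMulVec v' e' * K'⁻¹) := by
    calc A' * V' = A' * V' * (K' * K'⁻¹) := by rw [hK'inv, Matrix.mul_one]
      _ = (A' * V' * K') * K'⁻¹ := by simp only [Matrix.mul_assoc]
      _ = (V' * H' + (hh : ℂ) • vecMulVec v' e') * K'⁻¹ := by rw [harnoldi']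
      _ = V' * (H' * K'⁻¹) + (hh : ℂ) • (vecMulVec v' e' * K'⁻¹) := by
          rw [Matrix.add_mul, Matrix.smul_mul, Matrix.mul_assoc]
  -- the key residual computation
  have hMy : M *ᵥ y = Pi.single 0 1 := by
    rw [hydef, Matrix.mulVec_mulVec, hMinv, Matrix.one_mulVec]
  have hkey : (A' - z • 1) *ᵥ (V' *ᵥ y) =
      V' *ᵥ (Pi.single 0 1 : Fin (m + 1) → ℂ) +
        ((hh : ℂ) * (e' ⬝ᵥ (K'⁻¹ *ᵥ y))) • v' := by
    have h2 : (A' - z • 1) *ᵥ (V' *ᵥ y) = A' *ᵥ (V' *ᵥ y) - z • (V' *ᵥ y) := by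
      rw [Matrix.sub_mulVec, Matrix.smul_mulVec, Matrix.one_mulVec]
    have h3 : A' *ᵥ (V' *ᵥ y) = (A' * V') *ᵥ y := (Matrix.mulVec_mulVec _ _ _)
    have h4 : (V' * (H' * K'⁻¹)) *ᵥ y = V' *ᵥ ((H' * K'⁻¹) *ᵥ y) :=
      (Matrix.mulVec_mulVec _ _ _).symm
    have h5 : (H' * K'⁻¹) *ᵥ y = Pi.single 0 1 + z • y := by
      rw [← hHK']
      have hsplit : V'ᵀ * A' * V' = M + z • 1 := by rw [hMdef, sub_add_cancel]
      rw [hsplit, Matrix.add_mulVec, hMy, Matrix.smul_mulVec, Matrix.one_mulVec]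
    have h6 : (vecMulVec v' e' * K'⁻¹) *ᵥ y = (e' ⬝ᵥ (K'⁻¹ *ᵥ y)) • v' := by
      rw [← Matrix.mulVec_mulVec, vecMulVec_mulVec']
    rw [h2, h3, hAV, Matrix.add_mulVec, Matrix.smul_mulVec, h4, h5, h6,
      Matrix.mulVec_add, Matrix.mulVec_smul]
    funext i
    simp [smul_smul]
    ring
  rw [hb', Matrix.mulVec_smul, hkey]
  funext i
  simp only [Pi.smul_apply, Pi.sub_apply, Pi.add_apply, smul_eq_mul, Pi.neg_apply, neg_mul]
  ring
end
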